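/- arXiv:1309.6459 — 3 statements merged into one kernel-verified Lean document; each statement's English description precedes it below -/
import Mathlib

section
/- With R1, R2, Θ independent, R1 ~ μ_{λ1,c1}, R2 ~ μ_{λ2,c2}, Θ uniform on (0, π), and ρ = √(R1² + R2² − 2·R1·R2·cos Θ), for every r with 0 < r ≤ c2·t the joint probability P(ρ < r, R1 < c1·t, R2 = c2·t) equals (λ1·e^{−(λ1+λ2)t}/(π·c1)) · ∫_{c2t−r}^{β(r)} arccos((ξ² + (c2t)² − r²)/(2·c2t·ξ)) · ξ·(c1²t² − ξ²)^{−1/2} · exp((λ1/c1)·√(c1²t² − ξ²)) dξ, where β(r) = min{c2t + r, c1t}. -/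
open MeasureTheory ProbabilityTheory

/-- Density of the absolutely continuous part of the law of the distance from
the origin of a planar Markov random flight with speed `c` and rate `lam` at time `t`. -/
noncomputable def fac (t lam c z : ℝ) : ℝ :=
  if 0 < z ∧ z < c * t then
    (lam / c) * z / Real.sqrt (c ^ 2 * t ^ 2 - z ^ 2) *
      Real.exp (-(lam * t) + (lam / c) * Real.sqrt (c ^ 2 * t ^ 2 - z ^ 2))
  else 0

/-- The law of the distance from the origin of a planar Markov random flight:
singular part `e^{-λt}·δ_{ct}` plus absolutely continuous part with density `fac`. -/
noncomputable def flightLaw (t lam c : ℝ) : Measure ℝ :=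
  ENNReal.ofReal (Real.exp (-(lam * t))) • Measure.dirac (c * t) +
    volume.withDensity fun z => ENNReal.ofReal (fac t lam c z)

/-- The uniform probability measure on a set `s ⊆ ℝ`. -/
noncomputable def uniformMeasure (s : Set ℝ) : Measure ℝ :=
  (volume s)⁻¹ • volume.restrict s

/-- The Euclidean distance between the two flights, expressed through the radii
`R1, R2` and the angle `Θ` via the law of cosines. -/
noncomputable def rho {Ω : Type*} (R1 R2 Θ : Ω → ℝ) (ω : Ω) : ℝ :=
  Real.sqrt (R1 ω ^ 2 + R2 ω ^ 2 - 2 * R1 ω * R2 ω * Real.cos (Θ ω))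

lemma angle_set (u : ℝ) :
    {θ : ℝ | u < Real.cos θ} ∩ Set.Ioo 0 Real.pi = Set.Ioo 0 (Real.arccos u) := by
  ext θ
  simp only [Set.mem_inter_iff, Set.mem_setOf_eq, Set.mem_Ioo]
  constructor
  · rintro ⟨hu, h0, hπ⟩
    refine ⟨h0, ?_⟩
    rcases le_or_gt (-1) u with h1 | h1
    · have hθmem : Real.cos θ ∈ Set.Icc (-1:ℝ) 1 := ⟨Real.neg_one_le_cos θ, Real.cos_le_one θ⟩
      have := Real.strictAntiOn_arccos ⟨h1, hu.le.trans (Real.cos_le_one θ)⟩ hθmem hu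
      rwa [Real.arccos_cos h0.le hπ.le] at this
    · calc θ < Real.pi := hπ
        _ = Real.arccos u := (Real.arccos_eq_pi.mpr h1.le).symm
  · rintro ⟨h0, hθ⟩
    have hθπ : θ < Real.pi := lt_of_lt_of_le hθ (Real.arccos_le_pi u)
    refine ⟨?_, h0, hθπ⟩
    rcases lt_or_ge 1 u with h1 | h1
    · exfalso
      rw [Real.arccos_eq_zero.mpr h1.le] at hθ
      exact lt_asymm h0 hθ
    · rcases lt_or_ge u (-1) with h2 | h2
      · have hc : Real.cos Real.pi < Real.cos θ :=
          Real.strictAntiOn_cos ⟨h0.le, hθπ.le⟩ ⟨Real.pi_pos.le, le_refl _⟩ hθπ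
        rw [Real.cos_pi] at hc
        linarith
      · have hc : Real.cos (Real.arccos u) < Real.cos θ :=
          Real.strictAntiOn_cos ⟨h0.le, hθπ.le⟩ ⟨Real.arccos_nonneg u, Real.arccos_le_pi u⟩ hθ
        rwa [Real.cos_arccos h2 h1] at hc

lemma fac_nonneg (t lam c : ℝ) (hl : 0 ≤ lam) (hc : 0 ≤ c) (z : ℝ) : 0 ≤ fac t lam c z := by
  unfold fac
  split_ifs with h
  · have := h.1
    positivity
  · exact le_refl 0

lemma fac_measurable (t lam c : ℝ) : Measurable (fac t lam c) := by
  unfold fac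
  refine Measurable.ite ?_ ?_ measurable_const
  · exact (measurableSet_lt measurable_const measurable_id).inter
      (measurableSet_lt measurable_id measurable_const)
  · fun_prop

lemma fac_integrableOn (t lam c : ℝ) (ht : 0 < t) (hl : 0 < lam) (hc : 0 < c) :
    IntegrableOn (fac t lam c) (Set.Ioc 0 (c * t)) := by
  apply intervalIntegral.integrableOn_deriv_of_nonneg
    (g := fun x : ℝ => -Real.exp (-(lam * t) + (lam / c) * Real.sqrt (c ^ 2 * t ^ 2 - x ^ 2)))
  · exact Continuous.continuousOn (by fun_prop)
  · intro x hx
    rw [Set.mem_Ioo] at hx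
    have hv : (0:ℝ) < c ^ 2 * t ^ 2 - x ^ 2 := by nlinarith [hx.1, hx.2]
    have h1 : HasDerivAt (fun x : ℝ => c ^ 2 * t ^ 2 - x ^ 2) (-(2 * x)) x := by
      simpa using (hasDerivAt_pow 2 x).const_sub (c ^ 2 * t ^ 2)
    have h2 := HasDerivAt.const_mul (lam / c) (h1.sqrt hv.ne')
    have h3 := ((hasDerivAt_const x (-(lam * t))).add h2).exp.neg
    refine h3.congr_deriv ?_
    have hs : Real.sqrt (c ^ 2 * t ^ 2 - x ^ 2) ≠ 0 := (Real.sqrt_pos.mpr hv).ne'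
    show -(Real.exp (-(lam * t) + lam / c * Real.sqrt (c ^ 2 * t ^ 2 - x ^ 2)) *
      (0 + lam / c * (-(2 * x) / (2 * Real.sqrt (c ^ 2 * t ^ 2 - x ^ 2))))) = fac t lam c x
    rw [fac, if_pos hx]
    field_simp
    ring
  · intro x hx
    exact fac_nonneg t lam c hl.le hc.le x

theorem joint_prob_first_switched_small_r {Ω : Type*} [MeasureSpace Ω] [IsProbabilityMeasure (ℙ : Measure Ω)]
    (t l1 l2 c1 c2 : ℝ) (ht : 0 < t) (hl1 : 0 < l1) (hl2 : 0 < l2)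
    (hc2 : 0 < c2) (hc12 : c2 ≤ c1)
    (R1 R2 Θ : Ω → ℝ) (hmR1 : Measurable R1) (hmR2 : Measurable R2) (hmΘ : Measurable Θ)
    (hind : iIndepFun ![R1, R2, Θ] ℙ)
    (hR1 : Measure.map R1 ℙ = flightLaw t l1 c1)
    (hR2 : Measure.map R2 ℙ = flightLaw t l2 c2)
    (hΘ : Measure.map Θ ℙ = uniformMeasure (Set.Ioo 0 Real.pi))
    (r : ℝ) (hr0 : 0 < r) (hr : r ≤ c2 * t) :
    ℙ {ω | rho R1 R2 Θ ω < r ∧ R1 ω < c1 * t ∧ R2 ω = c2 * t}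
      = ENNReal.ofReal (l1 * Real.exp (-((l1 + l2) * t)) / (Real.pi * c1) *
          (∫ ξ in (c2 * t - r)..(min (c2 * t + r) (c1 * t)),
              Real.arccos ((ξ ^ 2 + (c2 * t) ^ 2 - r ^ 2) / (2 * (c2 * t) * ξ)) *
                (ξ / Real.sqrt (c1 ^ 2 * t ^ 2 - ξ ^ 2)) *
                Real.exp ((l1 / c1) * Real.sqrt (c1 ^ 2 * t ^ 2 - ξ ^ 2)))) := by
  have hc1 : 0 < c1 := lt_of_lt_of_le hc2 hc12
  have ha : 0 < c2 * t := mul_pos hc2 ht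
  have hb : 0 < c1 * t := mul_pos hc1 ht
  have hab : c2 * t ≤ c1 * t := mul_le_mul_of_nonneg_right hc12 ht.le
  have hra : 0 ≤ c2 * t - r := sub_nonneg.mpr hr
  have haβ : c2 * t - r ≤ min (c2 * t + r) (c1 * t) := le_min (by linarith) (by linarith)
  haveI : SFinite (uniformMeasure (Set.Ioo 0 Real.pi)) := by
    unfold uniformMeasure; infer_instance
  set S : Set (ℝ × ℝ) :=
    {p | Real.sqrt (p.1 ^ 2 + (c2 * t) ^ 2 - 2 * p.1 * (c2 * t) * Real.cos p.2) < r
      ∧ p.1 < c1 * t} with hS_def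
  have hS : MeasurableSet S := by
    rw [hS_def, Set.setOf_and]
    exact (measurableSet_lt (Continuous.measurable (by fun_prop)) measurable_const).inter
      (measurableSet_lt measurable_fst measurable_const)
  -- event rewriting
  have hev : {ω | rho R1 R2 Θ ω < r ∧ R1 ω < c1 * t ∧ R2 ω = c2 * t}
      = ((fun ω => (R1 ω, Θ ω)) ⁻¹' S) ∩ (R2 ⁻¹' {c2 * t}) := by
    ext ω
    simp only [rho, Set.mem_setOf_eq, Set.mem_inter_iff, Set.mem_preimage,
      Set.mem_singleton_iff, hS_def]
    constructor
    · rintro ⟨h1, h2, h3⟩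
      refine ⟨⟨?_, h2⟩, h3⟩
      rw [← h3]; exact h1
    · rintro ⟨⟨h1, h2⟩, h3⟩
      refine ⟨?_, h2, h3⟩
      rw [h3]; exact h1
  -- independence
  have hmv : ∀ i, Measurable (![R1, R2, Θ] i) := by
    intro i; fin_cases i <;> assumption
  have hIpair : IndepFun (fun ω => (R1 ω, Θ ω)) R2 ℙ := by
    have h := hind.indepFun_prodMk hmv 0 2 1 (by decide) (by decide)
    simpa using h
  have hI12 : IndepFun R1 Θ ℙ := by
    have h := hind.indepFun (show (0:Fin 3) ≠ 2 by decide)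
    simpa using h
  have hmap : Measure.map (fun ω => (R1 ω, Θ ω)) ℙ
      = (flightLaw t l1 c1).prod (uniformMeasure (Set.Ioo 0 Real.pi)) := by
    rw [← hR1, ← hΘ]
    exact (indepFun_iff_map_prod_eq_prod_map_map hmR1.aemeasurable hmΘ.aemeasurable).mp hI12
  -- the singular mass of R2
  have hR2a : ℙ (R2 ⁻¹' {c2 * t}) = ENNReal.ofReal (Real.exp (-(l2 * t))) := by
    rw [← Measure.map_apply hmR2 (measurableSet_singleton _), hR2, flightLaw,
      Measure.add_apply, Measure.smul_apply, smul_eq_mul,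
      withDensity_apply _ (measurableSet_singleton _),
      Measure.restrict_eq_zero.mpr (measure_singleton _), lintegral_zero_measure,
      Measure.dirac_apply_of_mem (Set.mem_singleton _)]
    simp
  -- G
  set G : ℝ → ℝ := fun x => fac t l1 c1 x *
      (Real.arccos ((x ^ 2 + (c2 * t) ^ 2 - r ^ 2) / (2 * (c2 * t) * x)) / Real.pi)
    with hG_def
  have hGnn : ∀ x, 0 ≤ G x := fun x =>
    mul_nonneg (fac_nonneg t l1 c1 hl1.le hc1.le x)
      (div_nonneg (Real.arccos_nonneg _) Real.pi_pos.le)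
  have hfacm : Measurable (fac t l1 c1) := fac_measurable t l1 c1
  have hGm : Measurable G := by
    apply hfacm.mul
    apply Measurable.div_const
    exact Real.continuous_arccos.measurable.comp (by fun_prop)
  -- section measure function
  have hg : Measurable fun x => uniformMeasure (Set.Ioo 0 Real.pi) (Prod.mk x ⁻¹' S) :=
    measurable_measure_prodMk_left hS
  have hgb : uniformMeasure (Set.Ioo 0 Real.pi) (Prod.mk (c1 * t) ⁻¹' S) = 0 := by
    have : Prod.mk (c1 * t) ⁻¹' S = ∅ := by
      ext θ; simp [hS_def]
    rw [this, measure_empty]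
  have hpoint : ∀ x, ENNReal.ofReal (fac t l1 c1 x) *
      uniformMeasure (Set.Ioo 0 Real.pi) (Prod.mk x ⁻¹' S) = ENNReal.ofReal (G x) := by
    intro x
    by_cases hx : 0 < x ∧ x < c1 * t
    · have hsec : Prod.mk x ⁻¹' S
          = {θ | (x ^ 2 + (c2 * t) ^ 2 - r ^ 2) / (2 * (c2 * t) * x) < Real.cos θ} := by
        ext θ
        simp only [hS_def, Set.mem_preimage, Set.mem_setOf_eq, hx.2, and_true]
        rw [Real.sqrt_lt' hr0, div_lt_iff₀ (mul_pos (mul_pos two_pos ha) hx.1)]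
        constructor <;> intro h <;> nlinarith
      have hνsec : uniformMeasure (Set.Ioo 0 Real.pi) (Prod.mk x ⁻¹' S)
          = ENNReal.ofReal
              (Real.arccos ((x ^ 2 + (c2 * t) ^ 2 - r ^ 2) / (2 * (c2 * t) * x)) / Real.pi) := by
        rw [hsec, uniformMeasure, Measure.smul_apply,
          Measure.restrict_apply' measurableSet_Ioo, angle_set, Real.volume_Ioo, Real.volume_Ioo,
          sub_zero, sub_zero, smul_eq_mul,
          ENNReal.ofReal_div_of_pos Real.pi_pos, ENNReal.div_eq_inv_mul]
      rw [hνsec, ← ENNReal.ofReal_mul (fac_nonneg t l1 c1 hl1.le hc1.le x), hG_def]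
    · have hfac0 : fac t l1 c1 x = 0 := by rw [fac, if_neg hx]
      rw [hG_def]
      simp [hfac0]
  -- integrability of G
  have hGint : Integrable G := by
    have hGind : G = (Set.Ioo 0 (c1 * t)).indicator G := by
      ext x
      by_cases hx : x ∈ Set.Ioo 0 (c1 * t)
      · rw [Set.indicator_of_mem hx]
      · rw [Set.indicator_of_notMem hx, hG_def]
        simp only
        rw [fac, if_neg (by simpa [Set.mem_Ioo] using hx), zero_mul]
    rw [hGind, integrable_indicator_iff measurableSet_Ioo]
    apply Integrable.mono
      (((fac_integrableOn t l1 c1 ht hl1 hc1).mono_set Set.Ioo_subset_Ioc_self))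
      (hGm.aestronglyMeasurable.restrict)
    filter_upwards with x
    rw [Real.norm_eq_abs, Real.norm_eq_abs, abs_of_nonneg (hGnn x),
      abs_of_nonneg (fac_nonneg t l1 c1 hl1.le hc1.le x)]
    exact mul_le_of_le_one_right (fac_nonneg t l1 c1 hl1.le hc1.le x)
      (div_le_one_of_le₀ (Real.arccos_le_pi _) Real.pi_pos.le)
  -- the key identity for the first factor
  have key : ℙ ((fun ω => (R1 ω, Θ ω)) ⁻¹' S) = ENNReal.ofReal (∫ x, G x) := by
    have h1 : ℙ ((fun ω => (R1 ω, Θ ω)) ⁻¹' S)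
        = ((flightLaw t l1 c1).prod (uniformMeasure (Set.Ioo 0 Real.pi))) S := by
      rw [← hmap]
      exact (Measure.map_apply (hmR1.prodMk hmΘ) hS).symm
    rw [h1, Measure.prod_apply hS, flightLaw, lintegral_add_measure, lintegral_smul_measure,
      lintegral_dirac' _ hg, hgb, smul_zero, zero_add,
      lintegral_withDensity_eq_lintegral_mul _ (hfacm.ennreal_ofReal) hg]
    simp only [Pi.mul_apply]
    rw [lintegral_congr hpoint]
    exact (ofReal_integral_eq_lintegral_ofReal hGint
      (Filter.Eventually.of_forall hGnn)).symm
  -- vanishing of G outside the interval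
  have hGout : ∀ x, x ∉ Set.Ioo (c2 * t - r) (min (c2 * t + r) (c1 * t)) → G x = 0 := by
    intro x hx
    rw [Set.mem_Ioo, not_and_or, not_lt, not_lt] at hx
    by_cases hxb : 0 < x ∧ x < c1 * t
    · have h1le : 1 ≤ (x ^ 2 + (c2 * t) ^ 2 - r ^ 2) / (2 * (c2 * t) * x) := by
        rw [le_div_iff₀ (mul_pos (mul_pos two_pos ha) hxb.1)]
        rcases hx with hx | hx
        · nlinarith
        · have har : c2 * t + r ≤ x := by
            rcases le_total (c2 * t + r) (c1 * t) with hc | hc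
            · rw [min_eq_left hc] at hx; exact hx
            · rw [min_eq_right hc] at hx; linarith [hxb.2]
          nlinarith
      rw [hG_def]
      simp only
      rw [Real.arccos_eq_zero.mpr h1le, zero_div, mul_zero]
    · rw [hG_def]
      simp only
      rw [fac, if_neg hxb, zero_mul]
  have hintG : ∫ x, G x = ∫ x in (c2 * t - r)..(min (c2 * t + r) (c1 * t)), G x := by
    have hGi : G = (Set.Ioo (c2 * t - r) (min (c2 * t + r) (c1 * t))).indicator G := by
      ext x
      by_cases hx : x ∈ Set.Ioo (c2 * t - r) (min (c2 * t + r) (c1 * t))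
      · rw [Set.indicator_of_mem hx]
      · rw [Set.indicator_of_notMem hx, hGout x hx]
    calc ∫ x, G x
        = ∫ x, (Set.Ioo (c2 * t - r) (min (c2 * t + r) (c1 * t))).indicator G x := by rw [← hGi]
      _ = ∫ x in Set.Ioo (c2 * t - r) (min (c2 * t + r) (c1 * t)), G x :=
          integral_indicator measurableSet_Ioo
      _ = ∫ x in Set.Ioc (c2 * t - r) (min (c2 * t + r) (c1 * t)), G x :=
          (integral_Ioc_eq_integral_Ioo).symm
      _ = ∫ x in (c2 * t - r)..(min (c2 * t + r) (c1 * t)), G x :=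
          (intervalIntegral.integral_of_le haβ).symm
  -- put everything together
  rw [hev, hIpair.measure_inter_preimage_eq_mul S {c2 * t} hS (measurableSet_singleton _),
    key, hR2a, ← ENNReal.ofReal_mul (integral_nonneg hGnn)]
  congr 1
  rw [hintG, ← intervalIntegral.integral_mul_const, ← intervalIntegral.integral_const_mul]
  apply intervalIntegral.integral_congr
  rw [Set.uIcc_of_le haβ]
  intro ξ hξ
  simp only
  rcases eq_or_lt_of_le hξ.1 with h1 | h1
  · -- ξ = c2*t - r
    rw [hG_def]
    simp only
    rw [← h1]
    rcases lt_or_ge r (c2 * t) with har | har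
    · have hu1 : ((c2 * t - r) ^ 2 + (c2 * t) ^ 2 - r ^ 2) / (2 * (c2 * t) * (c2 * t - r)) = 1 := by
        rw [div_eq_one_iff_eq (ne_of_gt (mul_pos (mul_pos two_pos ha) (by linarith)))]
        ring
      rw [hu1, Real.arccos_one]
      ring
    · have h0 : c2 * t - r = 0 := by linarith [le_antisymm har hr]
      rw [h0]
      simp [fac, lt_irrefl]
  · rcases eq_or_lt_of_le hξ.2 with h2 | h2
    · -- ξ = β
      rcases le_total (c2 * t + r) (c1 * t) with hc | hc
      · rw [min_eq_left hc] at h2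
        rw [hG_def]
        simp only
        rw [h2]
        have hu1 : ((c2 * t + r) ^ 2 + (c2 * t) ^ 2 - r ^ 2) / (2 * (c2 * t) * (c2 * t + r)) = 1 := by
          rw [div_eq_one_iff_eq (ne_of_gt (mul_pos (mul_pos two_pos ha) (by linarith)))]
          ring
        rw [hu1, Real.arccos_one]
        ring
      · rw [min_eq_right hc] at h2
        rw [hG_def]
        simp only
        rw [h2]
        have hfb : fac t l1 c1 (c1 * t) = 0 := by
          rw [fac, if_neg]; simp
        have hs0 : c1 ^ 2 * t ^ 2 - (c1 * t) ^ 2 = 0 := by ring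
        rw [hfb, hs0, Real.sqrt_zero, div_zero]
        ring
    · -- interior
      have hξ0 : 0 < ξ := lt_of_le_of_lt hra h1
      have hξb : ξ < c1 * t := lt_of_lt_of_le h2 (min_le_right _ _)
      rw [hG_def]
      simp only
      rw [fac, if_pos ⟨hξ0, hξb⟩, Real.exp_add,
        show (-((l1 + l2) * t)) = -(l1 * t) + -(l2 * t) by ring, Real.exp_add]
      ring
end

section
/- Fix t > 0, λ1, λ2 > 0 and c1 ≥ c2 > 0, and write f1 = f^{ac}_{λ1,c1}, f2 = f^{ac}_{λ2,c2}. For every r with 0 < r ≤ c2·t, the double integral of f1(ξ)·f2(ζ) over the region {(ξ, ζ) : ξ + ζ ≤ r, 0 < ξ < c1t, 0 < ζ < c2t} equals 1 − exp(−λ1t + (λ1/c1)·√(c1²t² − r²)) − (λ1/c1)·e^{−(λ1+λ2)t} · ∫₀^r ξ·(c1²t² − ξ²)^{−1/2} · exp((λ1/c1)·√(c1²t² − ξ²)) · exp((λ2/c2)·√(c2²t² − (r − ξ)²)) dξ. -/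
open MeasureTheory ProbabilityTheory

open Set

lemma flight_intervalIntegrable (t lam c s : ℝ) (ht : 0 < t) (hl : 0 < lam) (hc : 0 < c)
    (hs0 : 0 ≤ s) (hs : s ≤ c * t) :
    IntervalIntegrable (fun x => (lam / c) * x / Real.sqrt (c ^ 2 * t ^ 2 - x ^ 2) *
      Real.exp (-(lam * t) + (lam / c) * Real.sqrt (c ^ 2 * t ^ 2 - x ^ 2))) volume 0 s := by
  have hct : 0 < c * t := mul_pos hc ht
  have hsqct : 0 < Real.sqrt (c * t) := Real.sqrt_pos.2 hct
  -- majorant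
  have hmaj : IntervalIntegrable
      (fun x => (lam * t / Real.sqrt (c * t)) * (c * t - x) ^ (-(1/2) : ℝ)) volume 0 s := by
    apply IntervalIntegrable.const_mul
    have h1 : IntervalIntegrable (fun x : ℝ => x ^ (-(1/2) : ℝ)) volume (c * t) (c * t - s) :=
      intervalIntegral.intervalIntegrable_rpow' (by norm_num)
    have h2 := h1.comp_sub_left (c * t)
    simpa using h2
  apply hmaj.mono_fun'
  · apply Measurable.aestronglyMeasurable
    fun_prop
  · rw [uIoc_of_le hs0]
    refine (ae_restrict_iff' measurableSet_Ioc).2 (Filter.Eventually.of_forall fun x hx => ?_)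
    dsimp only
    rcases eq_or_lt_of_le (le_trans hx.2 hs) with hxe | hxlt
    · -- x = c * t : both sides vanish
      have h0 : c ^ 2 * t ^ 2 - x ^ 2 = 0 := by rw [hxe]; ring
      have h0' : c * t - x = 0 := by rw [hxe]; ring
      simp [h0, h0', Real.zero_rpow (by norm_num : (-(1/2) : ℝ) ≠ 0)]
    · -- x < c * t
      have hx0 : 0 < x := hx.1
      have hu : 0 < c ^ 2 * t ^ 2 - x ^ 2 := by nlinarith
      have hsqu : 0 < Real.sqrt (c ^ 2 * t ^ 2 - x ^ 2) := Real.sqrt_pos.2 hu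
      have hcx : 0 < c * t - x := by linarith
      have hsqcx : 0 < Real.sqrt (c * t - x) := Real.sqrt_pos.2 hcx
      have hnn : 0 ≤ (lam / c) * x / Real.sqrt (c ^ 2 * t ^ 2 - x ^ 2) *
          Real.exp (-(lam * t) + (lam / c) * Real.sqrt (c ^ 2 * t ^ 2 - x ^ 2)) := by
        positivity
      rw [Real.norm_eq_abs, abs_of_nonneg hnn]
      -- exp factor ≤ 1
      have hexp : Real.exp (-(lam * t) + (lam / c) * Real.sqrt (c ^ 2 * t ^ 2 - x ^ 2)) ≤ 1 := by
        rw [← Real.exp_zero]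
        apply Real.exp_le_exp.2
        have h1 : Real.sqrt (c ^ 2 * t ^ 2 - x ^ 2) ≤ c * t := by
          have : Real.sqrt (c ^ 2 * t ^ 2 - x ^ 2) ≤ Real.sqrt ((c * t) ^ 2) :=
            Real.sqrt_le_sqrt (by nlinarith)
          rwa [Real.sqrt_sq hct.le] at this
        have h2 : (lam / c) * Real.sqrt (c ^ 2 * t ^ 2 - x ^ 2) ≤ (lam / c) * (c * t) :=
          mul_le_mul_of_nonneg_left h1 (by positivity)
        have h3 : (lam / c) * (c * t) = lam * t := by field_simp
        linarith [h2, h3.le]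
      have hsplit : Real.sqrt (c ^ 2 * t ^ 2 - x ^ 2)
          = Real.sqrt (c * t - x) * Real.sqrt (c * t + x) := by
        rw [show c ^ 2 * t ^ 2 - x ^ 2 = (c * t - x) * (c * t + x) by ring,
          Real.sqrt_mul hcx.le]
      have hle1 : (lam / c) * x / Real.sqrt (c ^ 2 * t ^ 2 - x ^ 2) *
            Real.exp (-(lam * t) + (lam / c) * Real.sqrt (c ^ 2 * t ^ 2 - x ^ 2))
          ≤ (lam / c) * x / Real.sqrt (c ^ 2 * t ^ 2 - x ^ 2) := by
        have : 0 ≤ (lam / c) * x / Real.sqrt (c ^ 2 * t ^ 2 - x ^ 2) := by positivity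
        exact mul_le_of_le_one_right this hexp
      have hle2 : (lam / c) * x / Real.sqrt (c ^ 2 * t ^ 2 - x ^ 2)
          ≤ (lam / c) * (c * t) / (Real.sqrt (c * t - x) * Real.sqrt (c * t)) := by
        rw [hsplit]
        apply div_le_div₀ (by positivity)
        · apply mul_le_mul_of_nonneg_left (le_trans hx.2 hs) (by positivity)
        · positivity
        · apply mul_le_mul_of_nonneg_left _ hsqcx.le
          exact Real.sqrt_le_sqrt (by linarith)
      have heq : (lam / c) * (c * t) / (Real.sqrt (c * t - x) * Real.sqrt (c * t))
          = lam * t / Real.sqrt (c * t) * (c * t - x) ^ (-(1/2) : ℝ) := by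
        rw [Real.rpow_neg hcx.le, ← Real.sqrt_eq_rpow]
        field_simp
      calc (lam / c) * x / Real.sqrt (c ^ 2 * t ^ 2 - x ^ 2) *
            Real.exp (-(lam * t) + (lam / c) * Real.sqrt (c ^ 2 * t ^ 2 - x ^ 2))
          ≤ (lam / c) * x / Real.sqrt (c ^ 2 * t ^ 2 - x ^ 2) := hle1
        _ ≤ (lam / c) * (c * t) / (Real.sqrt (c * t - x) * Real.sqrt (c * t)) := hle2
        _ = lam * t / Real.sqrt (c * t) * (c * t - x) ^ (-(1/2) : ℝ) := heq

lemma flight_ftc (t lam c s : ℝ) (ht : 0 < t) (hl : 0 < lam) (hc : 0 < c)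
    (hs0 : 0 < s) (hs : s ≤ c * t) :
    (∫ x in (0:ℝ)..s, (lam / c) * x / Real.sqrt (c ^ 2 * t ^ 2 - x ^ 2) *
      Real.exp (-(lam * t) + (lam / c) * Real.sqrt (c ^ 2 * t ^ 2 - x ^ 2)))
    = 1 - Real.exp (-(lam * t) + (lam / c) * Real.sqrt (c ^ 2 * t ^ 2 - s ^ 2)) := by
  set G : ℝ → ℝ := fun x =>
    -Real.exp (-(lam * t) + (lam / c) * Real.sqrt (c ^ 2 * t ^ 2 - x ^ 2)) with hG
  have hGcont : Continuous G := by
    apply Continuous.neg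
    apply Real.continuous_exp.comp
    exact continuous_const.add (continuous_const.mul ((continuous_const.sub
      (continuous_pow 2)).sqrt))
  have hderiv : ∀ x ∈ Ioo 0 s, HasDerivAt G
      ((lam / c) * x / Real.sqrt (c ^ 2 * t ^ 2 - x ^ 2) *
        Real.exp (-(lam * t) + (lam / c) * Real.sqrt (c ^ 2 * t ^ 2 - x ^ 2))) x := by
    intro x hx
    have hu : 0 < c ^ 2 * t ^ 2 - x ^ 2 := by nlinarith [hx.1, hx.2, mul_pos hc ht]
    have hsq : 0 < Real.sqrt (c ^ 2 * t ^ 2 - x ^ 2) := Real.sqrt_pos.2 hu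
    have h1 : HasDerivAt (fun y : ℝ => c ^ 2 * t ^ 2 - y ^ 2) (-(2 * x)) x := by
      simpa using (hasDerivAt_pow 2 x).const_sub (c ^ 2 * t ^ 2)
    have h2 := h1.sqrt hu.ne'
    have h3 := (h2.const_mul (lam / c)).const_add (-(lam * t))
    have h4 := h3.exp
    have h5 := h4.neg
    refine HasDerivAt.congr_deriv h5 ?_
    ring
  have hint := flight_intervalIntegrable t lam c s ht hl hc hs0.le hs
  have ha : Filter.Tendsto G (nhdsWithin 0 (Ioi 0)) (nhds (G 0)) :=
    (hGcont.tendsto 0).mono_left nhdsWithin_le_nhds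
  have hb : Filter.Tendsto G (nhdsWithin s (Iio s)) (nhds (G s)) :=
    (hGcont.tendsto s).mono_left nhdsWithin_le_nhds
  rw [intervalIntegral.integral_eq_sub_of_hasDerivAt_of_tendsto hs0 hderiv hint ha hb]
  have hG0 : G 0 = -1 := by
    have h1 : Real.sqrt (c ^ 2 * t ^ 2 - 0 ^ 2) = c * t := by
      rw [show c ^ 2 * t ^ 2 - 0 ^ 2 = (c * t) ^ 2 by ring,
        Real.sqrt_sq (mul_pos hc ht).le]
    rw [hG]
    simp only [h1]
    rw [show -(lam * t) + lam / c * (c * t) = 0 by field_simp; ring, Real.exp_zero]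
  rw [hG0, hG]
  ring

theorem double_integral_I1_small_r (t l1 l2 c1 c2 r : ℝ) (ht : 0 < t) (hl1 : 0 < l1) (hl2 : 0 < l2)
    (hc2 : 0 < c2) (hc12 : c2 ≤ c1) (hr0 : 0 < r) (hr : r ≤ c2 * t) :
    (∫ p in {p : ℝ × ℝ | p.1 + p.2 ≤ r ∧ 0 < p.1 ∧ p.1 < c1 * t ∧ 0 < p.2 ∧ p.2 < c2 * t},
        fac t l1 c1 p.1 * fac t l2 c2 p.2)
      = 1 - Real.exp (-(l1 * t) + (l1 / c1) * Real.sqrt (c1 ^ 2 * t ^ 2 - r ^ 2))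
        - (l1 / c1) * Real.exp (-((l1 + l2) * t)) *
            (∫ ξ in (0:ℝ)..r,
            ξ / Real.sqrt (c1 ^ 2 * t ^ 2 - ξ ^ 2) *
              Real.exp ((l1 / c1) * Real.sqrt (c1 ^ 2 * t ^ 2 - ξ ^ 2)) *
              Real.exp ((l2 / c2) * Real.sqrt (c2 ^ 2 * t ^ 2 - (r - ξ) ^ 2))) := by
  have hc1 : 0 < c1 := lt_of_lt_of_le hc2 hc12
  have hrc2 : r ≤ c2 * t := hr
  have hrc1 : r ≤ c1 * t := le_trans hr (by nlinarith)
  set h1f : ℝ → ℝ := fun x => (l1 / c1) * x / Real.sqrt (c1 ^ 2 * t ^ 2 - x ^ 2) *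
    Real.exp (-(l1 * t) + (l1 / c1) * Real.sqrt (c1 ^ 2 * t ^ 2 - x ^ 2)) with hh1f
  set h2f : ℝ → ℝ := fun x => (l2 / c2) * x / Real.sqrt (c2 ^ 2 * t ^ 2 - x ^ 2) *
    Real.exp (-(l2 * t) + (l2 / c2) * Real.sqrt (c2 ^ 2 * t ^ 2 - x ^ 2)) with hh2f
  set S : Set (ℝ × ℝ) :=
    {p : ℝ × ℝ | p.1 + p.2 ≤ r ∧ 0 < p.1 ∧ p.1 < c1 * t ∧ 0 < p.2 ∧ p.2 < c2 * t} with hSdef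
  have hSm : MeasurableSet S := by
    apply MeasurableSet.inter
    · exact measurableSet_le (measurable_fst.add measurable_snd) measurable_const
    apply MeasurableSet.inter
    · exact measurableSet_lt measurable_const measurable_fst
    apply MeasurableSet.inter
    · exact measurableSet_lt measurable_fst measurable_const
    apply MeasurableSet.inter
    · exact measurableSet_lt measurable_const measurable_snd
    · exact measurableSet_lt measurable_snd measurable_const
  -- equality of fac with the explicit density on Ioc 0 r
  have hfac1 : ∀ x ∈ Ioc (0:ℝ) r, fac t l1 c1 x = h1f x := by
    intro x hx
    by_cases hlt : x < c1 * t
    · rw [fac, if_pos ⟨hx.1, hlt⟩]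
    · have hxe : x = c1 * t := le_antisymm (le_trans hx.2 hrc1) (not_lt.1 hlt)
      rw [fac, if_neg (by push_neg; intro _; exact not_lt.1 hlt), hh1f]
      simp [hxe, show c1 ^ 2 * t ^ 2 - (c1 * t) ^ 2 = 0 by ring]
  have hfac2 : ∀ x ∈ Ioc (0:ℝ) r, fac t l2 c2 x = h2f x := by
    intro x hx
    by_cases hlt : x < c2 * t
    · rw [fac, if_pos ⟨hx.1, hlt⟩]
    · have hxe : x = c2 * t := le_antisymm (le_trans hx.2 hrc2) (not_lt.1 hlt)
      rw [fac, if_neg (by push_neg; intro _; exact not_lt.1 hlt), hh2f]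
      simp [hxe, show c2 ^ 2 * t ^ 2 - (c2 * t) ^ 2 = 0 by ring]
  have hI1 : IntervalIntegrable h1f volume 0 r :=
    flight_intervalIntegrable t l1 c1 r ht hl1 hc1 hr0.le hrc1
  have hI2 : IntervalIntegrable h2f volume 0 r :=
    flight_intervalIntegrable t l2 c2 r ht hl2 hc2 hr0.le hrc2
  have hIf1 : IntegrableOn (fac t l1 c1) (Ioc 0 r) volume := by
    have := (intervalIntegrable_iff_integrableOn_Ioc_of_le hr0.le).1 hI1
    exact this.congr_fun (fun x hx => (hfac1 x hx).symm) measurableSet_Ioc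
  have hIf2 : IntegrableOn (fac t l2 c2) (Ioc 0 r) volume := by
    have := (intervalIntegrable_iff_integrableOn_Ioc_of_le hr0.le).1 hI2
    exact this.congr_fun (fun x hx => (hfac2 x hx).symm) measurableSet_Ioc
  -- integrability on S
  have hF : IntegrableOn (fun p : ℝ × ℝ => fac t l1 c1 p.1 * fac t l2 c2 p.2) S volume := by
    have hsub : S ⊆ Ioc (0:ℝ) r ×ˢ Ioc (0:ℝ) r := by
      rintro ⟨x, y⟩ ⟨hsum, hx0, _, hy0, _⟩
      exact ⟨⟨hx0, by linarith⟩, ⟨hy0, by linarith⟩⟩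
    apply IntegrableOn.mono_set _ hsub
    rw [IntegrableOn, Measure.volume_eq_prod, ← Measure.prod_restrict]
    exact Integrable.mul_prod hIf1 hIf2
  have hFi : Integrable (S.indicator fun p : ℝ × ℝ => fac t l1 c1 p.1 * fac t l2 c2 p.2)
      ((volume : Measure ℝ).prod (volume : Measure ℝ)) := by
    rw [← Measure.volume_eq_prod]
    exact (integrable_indicator_iff hSm).2 hF
  rw [← MeasureTheory.integral_indicator hSm, Measure.volume_eq_prod,
    MeasureTheory.integral_prod _ hFi]
  -- inner integral
  have hinner : ∀ x : ℝ,
      (∫ y, S.indicator (fun p : ℝ × ℝ => fac t l1 c1 p.1 * fac t l2 c2 p.2) (x, y))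
      = (Ioo (0:ℝ) r).indicator (fun x => fac t l1 c1 x *
          (1 - Real.exp (-(l2 * t) + (l2 / c2) *
            Real.sqrt (c2 ^ 2 * t ^ 2 - (r - x) ^ 2)))) x := by
    intro x
    by_cases hx : x ∈ Ioo (0:ℝ) r
    · have hxr : r - x < c2 * t := by linarith [hx.1]
      have hpt : ∀ y : ℝ, S.indicator (fun p : ℝ × ℝ => fac t l1 c1 p.1 * fac t l2 c2 p.2) (x, y)
          = fac t l1 c1 x * (Ioc 0 (r - x)).indicator (fac t l2 c2) y := by
        intro y
        by_cases hy : y ∈ Ioc (0:ℝ) (r - x)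
        · rw [Set.indicator_of_mem hy, Set.indicator_of_mem]
          exact ⟨by linarith [hy.2], hx.1, lt_of_lt_of_le hx.2 hrc1,
            hy.1, lt_of_le_of_lt hy.2 hxr⟩
        · rw [Set.indicator_of_notMem hy, Set.indicator_of_notMem, mul_zero]
          rintro ⟨hsum, _, _, hy0, _⟩
          exact hy ⟨hy0, by linarith⟩
      rw [Set.indicator_of_mem hx]
      simp only [hpt]
      rw [MeasureTheory.integral_const_mul, MeasureTheory.integral_indicator measurableSet_Ioc]
      congr 1
      have h0rx : (0:ℝ) < r - x := by linarith [hx.2]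
      rw [MeasureTheory.setIntegral_congr_fun measurableSet_Ioc
        (fun y hy => hfac2 y ⟨hy.1, le_trans hy.2 (by linarith [hx.1])⟩),
        ← intervalIntegral.integral_of_le h0rx.le]
      exact flight_ftc t l2 c2 (r - x) ht hl2 hc2 h0rx (by linarith [hx.1])
    · have hpt : ∀ y : ℝ,
          S.indicator (fun p : ℝ × ℝ => fac t l1 c1 p.1 * fac t l2 c2 p.2) (x, y) = 0 := by
        intro y
        apply Set.indicator_of_notMem
        rintro ⟨hsum, hx0, _, hy0, _⟩
        exact hx ⟨hx0, by linarith⟩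
      simp only [hpt, MeasureTheory.integral_zero, Set.indicator_of_notMem hx]
  simp only [hinner]
  rw [MeasureTheory.integral_indicator measurableSet_Ioo, ← integral_Ioc_eq_integral_Ioo,
    MeasureTheory.setIntegral_congr_fun measurableSet_Ioc
      (fun x hx => by dsimp only; rw [hfac1 x hx] :
        EqOn (fun x => fac t l1 c1 x * (1 - Real.exp (-(l2 * t) + (l2 / c2) *
            Real.sqrt (c2 ^ 2 * t ^ 2 - (r - x) ^ 2))))
          (fun x => h1f x * (1 - Real.exp (-(l2 * t) + (l2 / c2) *
            Real.sqrt (c2 ^ 2 * t ^ 2 - (r - x) ^ 2)))) (Ioc 0 r)),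
    ← intervalIntegral.integral_of_le hr0.le]
  have hI1E : IntervalIntegrable (fun x => h1f x * Real.exp (-(l2 * t) + (l2 / c2) *
      Real.sqrt (c2 ^ 2 * t ^ 2 - (r - x) ^ 2))) volume 0 r := by
    apply hI1.mono_fun
    · apply Measurable.aestronglyMeasurable
      rw [hh1f]; fun_prop
    · apply Filter.Eventually.of_forall
      intro x
      dsimp only
      rw [Real.norm_eq_abs, Real.norm_eq_abs, abs_mul]
      have hE : |Real.exp (-(l2 * t) + (l2 / c2) *
          Real.sqrt (c2 ^ 2 * t ^ 2 - (r - x) ^ 2))| ≤ 1 := by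
        rw [abs_of_pos (Real.exp_pos _), ← Real.exp_zero]
        apply Real.exp_le_exp.2
        have h1 : Real.sqrt (c2 ^ 2 * t ^ 2 - (r - x) ^ 2) ≤ c2 * t := by
          have h2 : Real.sqrt (c2 ^ 2 * t ^ 2 - (r - x) ^ 2) ≤ Real.sqrt ((c2 * t) ^ 2) :=
            Real.sqrt_le_sqrt (by nlinarith)
          rwa [Real.sqrt_sq (by positivity)] at h2
        have h2 : (l2 / c2) * Real.sqrt (c2 ^ 2 * t ^ 2 - (r - x) ^ 2) ≤ (l2 / c2) * (c2 * t) :=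
          mul_le_mul_of_nonneg_left h1 (by positivity)
        have h3 : (l2 / c2) * (c2 * t) = l2 * t := by field_simp
        linarith [h2, h3.le]
      calc |h1f x| * |Real.exp (-(l2 * t) + (l2 / c2) *
            Real.sqrt (c2 ^ 2 * t ^ 2 - (r - x) ^ 2))|
          ≤ |h1f x| * 1 := mul_le_mul_of_nonneg_left hE (abs_nonneg _)
        _ = |h1f x| := mul_one _
  have hsplit : (∫ x in (0:ℝ)..r, h1f x * (1 - Real.exp (-(l2 * t) + (l2 / c2) *
        Real.sqrt (c2 ^ 2 * t ^ 2 - (r - x) ^ 2))))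
      = (∫ x in (0:ℝ)..r, h1f x) - ∫ x in (0:ℝ)..r, h1f x *
          Real.exp (-(l2 * t) + (l2 / c2) * Real.sqrt (c2 ^ 2 * t ^ 2 - (r - x) ^ 2)) := by
    rw [← intervalIntegral.integral_sub hI1 hI1E]
    apply intervalIntegral.integral_congr
    intro x _
    ring
  rw [hsplit, flight_ftc t l1 c1 r ht hl1 hc1 hr0 hrc1]
  have hlast : (∫ x in (0:ℝ)..r, h1f x *
        Real.exp (-(l2 * t) + (l2 / c2) * Real.sqrt (c2 ^ 2 * t ^ 2 - (r - x) ^ 2)))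
      = (l1 / c1) * Real.exp (-((l1 + l2) * t)) *
          ∫ ξ in (0:ℝ)..r, ξ / Real.sqrt (c1 ^ 2 * t ^ 2 - ξ ^ 2) *
            Real.exp ((l1 / c1) * Real.sqrt (c1 ^ 2 * t ^ 2 - ξ ^ 2)) *
            Real.exp ((l2 / c2) * Real.sqrt (c2 ^ 2 * t ^ 2 - (r - ξ) ^ 2)) := by
    rw [← intervalIntegral.integral_const_mul]
    apply intervalIntegral.integral_congr
    intro x _
    rw [hh1f]
    simp only
    rw [show -((l1 + l2) * t) = -(l1 * t) + -(l2 * t) by ring,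
      Real.exp_add, Real.exp_add, Real.exp_add]
    ring
  rw [hlast]
end

section
/- Fix t > 0, λ1, λ2 > 0 and c1 ≥ c2 > 0, and write f1 = f^{ac}_{λ1,c1}, f2 = f^{ac}_{λ2,c2}. For every r with c1·t < r ≤ (c1 + c2)·t, the double integral of f1(ξ)·f2(ζ) over the region {(ξ, ζ) : ξ + ζ ≤ r, 0 < ξ < c1t, 0 < ζ < c2t} equals (1 − e^{−λ1t})·(1 − e^{−λ2t}) − e^{−(λ1+λ2)t}·[1 − exp((λ1/c1)·√(c1²t² − (r − c2t)²))] − (λ1/c1)·e^{−(λ1+λ2)t} · ∫_{r−c2t}^{c1t} ξ·(c1²t² − ξ²)^{−1/2} · exp((λ1/c1)·√(c1²t² − ξ²)) · exp((λ2/c2)·√(c2²t² − (r − ξ)²)) dξ. -/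
open MeasureTheory ProbabilityTheory

namespace FacAux

open Real Set intervalIntegral

lemma fac_eq_zero {t l c z : ℝ} (h : ¬(0 < z ∧ z < c * t)) : fac t l c z = 0 := if_neg h

lemma fac_nonneg {t l c : ℝ} (hl : 0 < l) (hc : 0 < c) (z : ℝ) : 0 ≤ fac t l c z := by
  unfold fac
  split
  · rename_i h
    have hz := h.1
    positivity
  · exact le_rfl

lemma measurable_fac (t l c : ℝ) : Measurable (fac t l c) := by
  unfold fac
  apply Measurable.ite
  · exact measurableSet_Ioo (a := (0:ℝ)) (b := c * t)
  · fun_prop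
  · fun_prop

lemma exp_fac_le_one {t l c : ℝ} (ht : 0 < t) (hl : 0 < l) (hc : 0 < c) {z : ℝ} :
    Real.exp (-(l * t) + (l / c) * Real.sqrt (c ^ 2 * t ^ 2 - z ^ 2)) ≤ 1 := by
  rw [Real.exp_le_one_iff]
  have h1 : Real.sqrt (c ^ 2 * t ^ 2 - z ^ 2) ≤ c * t := by
    calc Real.sqrt (c ^ 2 * t ^ 2 - z ^ 2) ≤ Real.sqrt (c ^ 2 * t ^ 2) :=
          Real.sqrt_le_sqrt (by nlinarith [sq_nonneg z])
    _ = c * t := by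
          rw [show c ^ 2 * t ^ 2 = (c * t) ^ 2 by ring, Real.sqrt_sq (by positivity)]
  have h2 : (l / c) * Real.sqrt (c ^ 2 * t ^ 2 - z ^ 2) ≤ (l / c) * (c * t) :=
    mul_le_mul_of_nonneg_left h1 (by positivity)
  have h3 : (l / c) * (c * t) = l * t := by field_simp
  linarith

lemma integrable_fac {t l c : ℝ} (ht : 0 < t) (hl : 0 < l) (hc : 0 < c) :
    Integrable (fac t l c) := by
  set G : ℝ → ℝ := Set.indicator (Set.Ioo 0 (c * t))
      (fun z => (l / c) * (Real.sqrt (c * t) * (c * t - z) ^ (-(1/2) : ℝ))) with hG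
  have hGint : Integrable G := by
    have h1 : IntervalIntegrable (fun x : ℝ => x ^ (-(1/2) : ℝ)) volume 0 (c * t) :=
      intervalIntegral.intervalIntegrable_rpow' (by norm_num)
    have h2 : IntervalIntegrable (fun x : ℝ => (c * t - x) ^ (-(1/2) : ℝ)) volume 0 (c * t) := by
      have := (h1.comp_sub_left (c * t)).symm
      simpa using this
    have h3 : IntegrableOn (fun x : ℝ => (c * t - x) ^ (-(1/2) : ℝ)) (Set.Ioo 0 (c * t)) := by
      have := (intervalIntegrable_iff_integrableOn_Ioo_of_le (by positivity)).mp h2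
      exact this
    have h4 : IntegrableOn
        (fun z : ℝ => (l / c) * (Real.sqrt (c * t) * (c * t - z) ^ (-(1/2) : ℝ)))
        (Set.Ioo 0 (c * t)) := by
      simpa [mul_assoc, IntegrableOn] using (h3.const_mul ((l / c) * Real.sqrt (c * t)))
    exact h4.integrable_indicator measurableSet_Ioo
  refine hGint.mono' ((measurable_fac t l c).aestronglyMeasurable) (ae_of_all _ fun z => ?_)
  by_cases hz : z ∈ Set.Ioo 0 (c * t)
  · rw [hG, Set.indicator_of_mem hz]
    obtain ⟨hz0, hzc⟩ := hz
    rw [Real.norm_eq_abs, abs_of_nonneg (fac_nonneg hl hc z)]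
    rw [fac, if_pos ⟨hz0, hzc⟩]
    have hsub : c ^ 2 * t ^ 2 - z ^ 2 = (c * t - z) * (c * t + z) := by ring
    have hctz : (0:ℝ) < c * t - z := by linarith
    have hctz' : (0:ℝ) < c * t + z := by positivity
    have hrpow : (c * t - z) ^ (-(1/2) : ℝ) = (Real.sqrt (c * t - z))⁻¹ := by
      rw [Real.rpow_neg hctz.le, Real.sqrt_eq_rpow]
    have hkey : z / Real.sqrt (c ^ 2 * t ^ 2 - z ^ 2)
        ≤ Real.sqrt (c * t) * (c * t - z) ^ (-(1/2) : ℝ) := by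
      rw [hsub, Real.sqrt_mul hctz.le, hrpow]
      have hden : (0:ℝ) < Real.sqrt (c * t - z) * Real.sqrt (c * t) := by positivity
      have hle : Real.sqrt (c * t - z) * Real.sqrt (c * t)
          ≤ Real.sqrt (c * t - z) * Real.sqrt (c * t + z) :=
        mul_le_mul_of_nonneg_left (Real.sqrt_le_sqrt (by linarith)) (Real.sqrt_nonneg _)
      calc z / (Real.sqrt (c * t - z) * Real.sqrt (c * t + z))
          ≤ (c * t) / (Real.sqrt (c * t - z) * Real.sqrt (c * t)) :=
            div_le_div₀ (by positivity) hzc.le hden hle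
        _ = Real.sqrt (c * t) * (Real.sqrt (c * t - z))⁻¹ := by
            rw [mul_comm (Real.sqrt (c * t - z)) (Real.sqrt (c * t)), ← div_div,
              Real.div_sqrt, div_eq_mul_inv]
    calc (l / c) * z / Real.sqrt (c ^ 2 * t ^ 2 - z ^ 2) *
          Real.exp (-(l * t) + (l / c) * Real.sqrt (c ^ 2 * t ^ 2 - z ^ 2))
        ≤ (l / c) * z / Real.sqrt (c ^ 2 * t ^ 2 - z ^ 2) * 1 := by
          apply mul_le_mul_of_nonneg_left (exp_fac_le_one ht hl hc)
          positivity
      _ = (l / c) * (z / Real.sqrt (c ^ 2 * t ^ 2 - z ^ 2)) := by ring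
      _ ≤ (l / c) * (Real.sqrt (c * t) * (c * t - z) ^ (-(1/2) : ℝ)) :=
          mul_le_mul_of_nonneg_left hkey (by positivity)
  · rw [hG, Set.indicator_of_notMem hz, fac_eq_zero (by simpa [Set.mem_Ioo] using hz)]
    simp

lemma hasDerivAt_F {t l c : ℝ} (ht : 0 < t) (hl : 0 < l) (hc : 0 < c) {z : ℝ}
    (h1 : 0 < z) (h2 : z < c * t) :
    HasDerivAt (fun y => -Real.exp (-(l * t) + (l / c) * Real.sqrt (c ^ 2 * t ^ 2 - y ^ 2)))
      (fac t l c z) z := by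
  have hu : (0:ℝ) < c ^ 2 * t ^ 2 - z ^ 2 := by nlinarith
  have hsq : (0:ℝ) < Real.sqrt (c ^ 2 * t ^ 2 - z ^ 2) := Real.sqrt_pos.mpr hu
  have d1 : HasDerivAt (fun y : ℝ => c ^ 2 * t ^ 2 - y ^ 2) (-(2 * z)) z := by
    simpa using (hasDerivAt_pow 2 z).const_sub (c ^ 2 * t ^ 2)
  have d2 := d1.sqrt hu.ne'
  have d3 := (((d2.const_mul (l / c)).const_add (-(l * t))).exp).neg
  refine HasDerivAt.congr_deriv d3 (Eq.symm ?_)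
  rw [fac, if_pos ⟨h1, h2⟩]
  field_simp

lemma integral_fac {t l c : ℝ} (ht : 0 < t) (hl : 0 < l) (hc : 0 < c) {a b : ℝ}
    (ha : 0 ≤ a) (hab : a ≤ b) (hb : b ≤ c * t) :
    ∫ z in a..b, fac t l c z
      = Real.exp (-(l * t) + (l / c) * Real.sqrt (c ^ 2 * t ^ 2 - a ^ 2))
        - Real.exp (-(l * t) + (l / c) * Real.sqrt (c ^ 2 * t ^ 2 - b ^ 2)) := by
  have hint : IntervalIntegrable (fac t l c) volume a b :=
    (integrable_fac ht hl hc).intervalIntegrable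
  have hcont : ContinuousOn
      (fun y => -Real.exp (-(l * t) + (l / c) * Real.sqrt (c ^ 2 * t ^ 2 - y ^ 2)))
      (Set.Icc a b) := by
    apply Continuous.continuousOn
    fun_prop
  have := intervalIntegral.integral_eq_sub_of_hasDerivAt_of_le hab hcont
    (fun x hx => hasDerivAt_F ht hl hc (lt_of_le_of_lt ha hx.1) (lt_of_lt_of_le hx.2 hb)) hint
  rw [this]
  ring

lemma cdf0 {t l c : ℝ} (ht : 0 < t) (hl : 0 < l) (hc : 0 < c) {w : ℝ}
    (h0 : 0 ≤ w) (hw : w ≤ c * t) :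
    ∫ y in Set.Ioc 0 w, fac t l c y
      = 1 - Real.exp (-(l * t) + (l / c) * Real.sqrt (c ^ 2 * t ^ 2 - w ^ 2)) := by
  rw [← intervalIntegral.integral_of_le h0, integral_fac ht hl hc le_rfl h0 hw]
  congr 1
  rw [show c ^ 2 * t ^ 2 - 0 ^ 2 = (c * t) ^ 2 by ring, Real.sqrt_sq (by positivity),
    show -(l * t) + l / c * (c * t) = 0 by field_simp; ring, Real.exp_zero]

end FacAux

open FacAux Set

theorem double_integral_I1_large_r (t l1 l2 c1 c2 r : ℝ) (ht : 0 < t) (hl1 : 0 < l1) (hl2 : 0 < l2)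
    (hc2 : 0 < c2) (hc12 : c2 ≤ c1) (hr0 : c1 * t < r) (hr : r ≤ (c1 + c2) * t) :
    (∫ p in {p : ℝ × ℝ | p.1 + p.2 ≤ r ∧ 0 < p.1 ∧ p.1 < c1 * t ∧ 0 < p.2 ∧ p.2 < c2 * t},
        fac t l1 c1 p.1 * fac t l2 c2 p.2)
      = (1 - Real.exp (-(l1 * t))) * (1 - Real.exp (-(l2 * t)))
        - Real.exp (-((l1 + l2) * t)) *
            (1 - Real.exp ((l1 / c1) * Real.sqrt (c1 ^ 2 * t ^ 2 - (r - c2 * t) ^ 2)))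
        - (l1 / c1) * Real.exp (-((l1 + l2) * t)) *
            (∫ ξ in (r - c2 * t)..(c1 * t),
            ξ / Real.sqrt (c1 ^ 2 * t ^ 2 - ξ ^ 2) *
              Real.exp ((l1 / c1) * Real.sqrt (c1 ^ 2 * t ^ 2 - ξ ^ 2)) *
              Real.exp ((l2 / c2) * Real.sqrt (c2 ^ 2 * t ^ 2 - (r - ξ) ^ 2))) := by
  have hc1 : 0 < c1 := lt_of_lt_of_le hc2 hc12
  set m : ℝ := r - c2 * t with hm
  have hm0 : 0 ≤ m := by nlinarith
  have hmc : m ≤ c1 * t := by nlinarith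
  have hrc1 : 0 < r - c1 * t := by linarith
  set f1 : ℝ → ℝ := fac t l1 c1 with hf1
  set f2 : ℝ → ℝ := fac t l2 c2 with hf2
  set g : ℝ × ℝ → ℝ := fun p => f1 p.1 * f2 p.2 with hgdef
  have hi1 : Integrable f1 := integrable_fac ht hl1 hc1
  have hi2 : Integrable f2 := integrable_fac ht hl2 hc2
  have hg : Integrable g := by
    rw [MeasureTheory.Measure.volume_eq_prod]
    exact hi1.mul_prod hi2
  set S : Set (ℝ × ℝ) :=
    {p : ℝ × ℝ | p.1 + p.2 ≤ r ∧ 0 < p.1 ∧ p.1 < c1 * t ∧ 0 < p.2 ∧ p.2 < c2 * t} with hSdef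
  set T : Set (ℝ × ℝ) := {p : ℝ × ℝ | p.1 + p.2 ≤ r} with hTdef
  have hT : MeasurableSet T := by
    have : T = (fun p : ℝ × ℝ => p.1 + p.2) ⁻¹' Set.Iic r := rfl
    rw [this]
    exact (measurable_fst.add measurable_snd) measurableSet_Iic
  have hS : MeasurableSet S := by
    have : S = T ∩ (Prod.fst ⁻¹' Set.Ioo 0 (c1 * t)) ∩ (Prod.snd ⁻¹' Set.Ioo 0 (c2 * t)) := by
      ext p; simp [hSdef, hTdef, Set.mem_Ioo]; tauto
    rw [this]
    exact (hT.inter (measurable_fst measurableSet_Ioo)).inter (measurable_snd measurableSet_Ioo)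
  have hind : S.indicator g = T.indicator g := by
    funext p
    by_cases hp : p ∈ T
    · rw [Set.indicator_of_mem hp]
      by_cases hp2 : p ∈ S
      · rw [Set.indicator_of_mem hp2]
      · rw [Set.indicator_of_notMem hp2]
        have hbox : ¬(0 < p.1 ∧ p.1 < c1 * t) ∨ ¬(0 < p.2 ∧ p.2 < c2 * t) := by
          by_contra hcontra
          push_neg at hcontra
          exact hp2 ⟨hp, hcontra.1.1, hcontra.1.2, hcontra.2.1, hcontra.2.2⟩
      
        rcases hbox with h | h
        · simp [hgdef, hf1, fac_eq_zero h]
        · simp [hgdef, hf2, fac_eq_zero h]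
    · rw [Set.indicator_of_notMem hp, Set.indicator_of_notMem (fun hs => hp hs.1)]
  have hgi : Integrable (T.indicator g) := hg.indicator hT
  rw [← MeasureTheory.integral_indicator hS, hind, MeasureTheory.integral_indicator hT,
    ← MeasureTheory.integral_indicator hT]
  rw [MeasureTheory.Measure.volume_eq_prod] at hgi ⊢
  rw [MeasureTheory.integral_prod _ hgi]
  -- inner integral
  have hinner : ∀ x : ℝ, (∫ y, T.indicator g (x, y))
      = f1 x * ∫ y in Set.Iic (r - x), f2 y := by
    intro x
    rw [← MeasureTheory.integral_indicator measurableSet_Iic, ← MeasureTheory.integral_const_mul]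
    congr 1
    funext y
    by_cases h : x + y ≤ r
    · rw [Set.indicator_of_mem (show (x, y) ∈ T from h),
        Set.indicator_of_mem (show y ∈ Set.Iic (r - x) from by simpa [Set.mem_Iic] using by linarith)]
    · rw [Set.indicator_of_notMem (show (x, y) ∉ T from h),
        Set.indicator_of_notMem (show y ∉ Set.Iic (r - x) from by
          simp only [Set.mem_Iic]; intro hy; exact h (by linarith))]
      ring
  simp only [hinner]
  -- rewrite the Iic integral as an Ioc integral
  have hphi : ∀ x : ℝ, (∫ y in Set.Iic (r - x), f2 y)
      = ∫ y in Set.Ioc 0 (min (r - x) (c2 * t)), f2 y := by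
    intro x
    rw [← MeasureTheory.integral_indicator measurableSet_Iic,
      ← MeasureTheory.integral_indicator measurableSet_Ioc]
    congr 1
    funext y
    by_cases h1 : y ∈ Set.Iic (r - x) <;> by_cases h2 : y ∈ Set.Ioc 0 (min (r - x) (c2 * t))
    · rw [Set.indicator_of_mem h1, Set.indicator_of_mem h2]
    · rw [Set.indicator_of_mem h1, Set.indicator_of_notMem h2]
      apply fac_eq_zero
      rintro ⟨hy0, hyc⟩
      exact h2 ⟨hy0, le_min h1 hyc.le⟩
    · exact absurd (h2.2.trans (min_le_left _ _)) h1
    · rw [Set.indicator_of_notMem h1, Set.indicator_of_notMem h2]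
  -- integrability of x ↦ f1 x * φ x
  set φ : ℝ → ℝ := fun x => ∫ y in Set.Iic (r - x), f2 y with hφdef
  have hφint : Integrable (fun x => f1 x * φ x) := by
    have h := hgi.integral_prod_left
    exact h.congr (MeasureTheory.ae_of_all _ fun x => hinner x)
  -- the function vanishes outside Ioc 0 (c1 t)
  have hvanish : (fun x => f1 x * φ x) = (Set.Ioc 0 (c1 * t)).indicator (fun x => f1 x * φ x) := by
    funext x
    by_cases hx : x ∈ Set.Ioc 0 (c1 * t)
    · rw [Set.indicator_of_mem hx]
    · rw [Set.indicator_of_notMem hx]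
      have : f1 x = 0 := by
        apply fac_eq_zero
        rintro ⟨h1, h2⟩
        exact hx ⟨h1, h2.le⟩
      rw [this, zero_mul]
  have hsplit : (∫ x, f1 x * φ x)
      = (∫ x in Set.Ioc 0 m, f1 x * φ x) + ∫ x in Set.Ioc m (c1 * t), f1 x * φ x := by
    have h0 : (∫ x, f1 x * φ x) = ∫ x in Set.Ioc 0 (c1 * t), f1 x * φ x := by
      rw [← MeasureTheory.integral_indicator measurableSet_Ioc, ← hvanish]
    rw [h0, ← Set.Ioc_union_Ioc_eq_Ioc hm0 hmc,
      MeasureTheory.setIntegral_union (Set.Ioc_disjoint_Ioc_of_le le_rfl) measurableSet_Ioc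
        hφint.integrableOn hφint.integrableOn]
  rw [hsplit]
  -- piece 1
  have hc2t : 0 ≤ c2 * t := by positivity
  have hp1 : (∫ x in Set.Ioc 0 m, f1 x * φ x)
      = (1 - Real.exp (-(l2 * t))) *
          (1 - Real.exp (-(l1 * t) + (l1 / c1) * Real.sqrt (c1 ^ 2 * t ^ 2 - m ^ 2))) := by
    have heq : ∀ x ∈ Set.Ioc 0 m, f1 x * φ x = f1 x * (1 - Real.exp (-(l2 * t))) := by
      intro x hx
      congr 1
      rw [hφdef]
      simp only
      rw [hphi x, min_eq_right (by simp only [hm] at hx ⊢; linarith [hx.2]),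
        cdf0 ht hl2 hc2 hc2t le_rfl]
      rw [show c2 ^ 2 * t ^ 2 - (c2 * t) ^ 2 = 0 by ring, Real.sqrt_zero, mul_zero, add_zero]
    rw [MeasureTheory.setIntegral_congr_fun measurableSet_Ioc heq,
      MeasureTheory.integral_mul_const, ← intervalIntegral.integral_of_le hm0,
      FacAux.integral_fac ht hl1 hc1 le_rfl hm0 hmc]
    rw [show c1 ^ 2 * t ^ 2 - 0 ^ 2 = (c1 * t) ^ 2 by ring, Real.sqrt_sq (by positivity),
      show -(l1 * t) + l1 / c1 * (c1 * t) = 0 by field_simp; ring, Real.exp_zero]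
    ring
  -- piece 2
  set E : ℝ → ℝ := fun x =>
    Real.exp (-(l2 * t) + (l2 / c2) * Real.sqrt (c2 ^ 2 * t ^ 2 - (r - x) ^ 2)) with hEdef
  have hEle1 : ∀ x, E x ≤ 1 := fun x => exp_fac_le_one ht hl2 hc2
  have hEpos : ∀ x, 0 < E x := fun x => Real.exp_pos _
  have hf1E : Integrable (fun x => f1 x * E x) := by
    refine hi1.mono' ?_ (MeasureTheory.ae_of_all _ fun x => ?_)
    · exact ((measurable_fac t l1 c1).mul (by fun_prop)).aestronglyMeasurable
    · rw [Real.norm_eq_abs, abs_of_nonneg (by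
        exact mul_nonneg (fac_nonneg hl1 hc1 x) (hEpos x).le)]
      calc f1 x * E x ≤ f1 x * 1 :=
            mul_le_mul_of_nonneg_left (hEle1 x) (fac_nonneg hl1 hc1 x)
        _ = f1 x := mul_one _
      
  have hp2a : ∀ x ∈ Set.Ioc m (c1 * t), f1 x * φ x = f1 x - f1 x * E x := by
    intro x hx
    have hxm : m < x := hx.1
    have hxc : x ≤ c1 * t := hx.2
    have hw0 : 0 ≤ r - x := by linarith
    have hwc : r - x ≤ c2 * t := by simp only [hm] at hxm; linarith
    have : φ x = 1 - E x := by
      rw [hφdef]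
      simp only
      rw [hphi x, min_eq_left hwc, cdf0 ht hl2 hc2 hw0 hwc]
    rw [this]
    ring
  have hp2 : (∫ x in Set.Ioc m (c1 * t), f1 x * φ x)
      = (Real.exp (-(l1 * t) + (l1 / c1) * Real.sqrt (c1 ^ 2 * t ^ 2 - m ^ 2))
          - Real.exp (-(l1 * t)))
        - (l1 / c1) * Real.exp (-((l1 + l2) * t)) *
            (∫ ξ in m..(c1 * t),
              ξ / Real.sqrt (c1 ^ 2 * t ^ 2 - ξ ^ 2) *
                Real.exp ((l1 / c1) * Real.sqrt (c1 ^ 2 * t ^ 2 - ξ ^ 2)) *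
                Real.exp ((l2 / c2) * Real.sqrt (c2 ^ 2 * t ^ 2 - (r - ξ) ^ 2))) := by
    rw [MeasureTheory.setIntegral_congr_fun measurableSet_Ioc hp2a]
    rw [MeasureTheory.integral_sub hi1.integrableOn hf1E.integrableOn]
    have e1 : (∫ x in Set.Ioc m (c1 * t), f1 x)
        = Real.exp (-(l1 * t) + (l1 / c1) * Real.sqrt (c1 ^ 2 * t ^ 2 - m ^ 2))
          - Real.exp (-(l1 * t)) := by
      rw [← intervalIntegral.integral_of_le hmc, FacAux.integral_fac ht hl1 hc1 hm0 hmc le_rfl]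
      rw [show c1 ^ 2 * t ^ 2 - (c1 * t) ^ 2 = 0 by ring, Real.sqrt_zero, mul_zero, add_zero]
    have e2 : (∫ x in Set.Ioc m (c1 * t), f1 x * E x)
        = (l1 / c1) * Real.exp (-((l1 + l2) * t)) *
            (∫ ξ in m..(c1 * t),
              ξ / Real.sqrt (c1 ^ 2 * t ^ 2 - ξ ^ 2) *
                Real.exp ((l1 / c1) * Real.sqrt (c1 ^ 2 * t ^ 2 - ξ ^ 2)) *
                Real.exp ((l2 / c2) * Real.sqrt (c2 ^ 2 * t ^ 2 - (r - ξ) ^ 2))) := by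
      have heq : ∀ x ∈ Set.Ioc m (c1 * t), f1 x * E x
          = (l1 / c1) * Real.exp (-((l1 + l2) * t)) *
              (x / Real.sqrt (c1 ^ 2 * t ^ 2 - x ^ 2) *
                Real.exp ((l1 / c1) * Real.sqrt (c1 ^ 2 * t ^ 2 - x ^ 2)) *
                Real.exp ((l2 / c2) * Real.sqrt (c2 ^ 2 * t ^ 2 - (r - x) ^ 2))) := by
        intro x hx
        have hx0 : 0 < x := lt_of_le_of_lt hm0 hx.1
        rcases eq_or_lt_of_le hx.2 with hxe | hxl
        · have hz : f1 x = 0 := fac_eq_zero (by rintro ⟨_, h⟩; rw [hxe] at h; exact lt_irrefl _ h)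
          rw [hz, zero_mul]
          rw [hxe, show c1 ^ 2 * t ^ 2 - (c1 * t) ^ 2 = 0 by ring, Real.sqrt_zero, div_zero,
            zero_mul, zero_mul, mul_zero]
        · rw [hf1, fac, if_pos ⟨hx0, hxl⟩, hEdef]
          simp only
          rw [show -((l1 + l2) * t) = -(l1 * t) + -(l2 * t) by ring]
          rw [Real.exp_add, Real.exp_add, Real.exp_add]
          ring
      rw [MeasureTheory.setIntegral_congr_fun measurableSet_Ioc heq,
        MeasureTheory.integral_const_mul, ← intervalIntegral.integral_of_le hmc]
    rw [e1, e2]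
  rw [hp1, hp2]
  rw [show -((l1 + l2) * t) = -(l1 * t) + -(l2 * t) by ring, Real.exp_add, Real.exp_add]
  ring
end
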